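/- Let f : ℝ → ℝ be four times continuously differentiable. Define the Gauss–Legendre edge value Q(h) = (1/2) f(0) + (1/2) f(t₁(h)) + (1/2) f(t₂(h)) - (1/2) f(h), where t₁(h) = h/2 - h/(2√3) and t₂(h) = h/2 + h/(2√3). Then there exist constants C > 0 and h₀ > 0 such that for all 0 < h ≤ h₀, |Q(h) - ( f(0) - (h²/12) f''(0) - (h³/24) f'''(0) )| ≤ C h⁴. -/

import Mathlib

open Set

lemma gl_iterWithin_eq (f : ℝ → ℝ) (hf : ContDiff ℝ 4 f) {a b : ℝ} (hab : a < b) :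
    ∀ k : ℕ, k ≤ 4 → ∀ x ∈ Set.Icc a b,
      iteratedDerivWithin k f (Set.Icc a b) x = iteratedDeriv k f x := by
  intro k
  induction k with
  | zero => intro _ x _; simp [iteratedDerivWithin_zero]
  | succ n ih =>
    intro hk x hx
    have hu : UniqueDiffOn ℝ (Set.Icc a b) := uniqueDiffOn_Icc hab
    rw [iteratedDerivWithin_succ, iteratedDeriv_succ]
    have heq : Set.EqOn (iteratedDerivWithin n f (Set.Icc a b)) (iteratedDeriv n f)
        (Set.Icc a b) := fun y hy => ih (by omega) y hy
    rw [derivWithin_congr heq (heq hx)]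
    exact DifferentiableAt.derivWithin
      ((hf.differentiable_iteratedDeriv n (by exact_mod_cast Nat.lt_of_succ_le hk)).differentiableAt)
      (hu x hx)

lemma gl_taylor4 (f : ℝ → ℝ) (hf : ContDiff ℝ 4 f) (M : ℝ)
    (hM : ∀ y ∈ Set.Icc (0:ℝ) 1, |iteratedDeriv 4 f y| ≤ M) :
    ∀ x ∈ Set.Icc (0:ℝ) 1,
      |f x - (f 0 + deriv f 0 * x + iteratedDeriv 2 f 0 * x ^ 2 / 2 +
        iteratedDeriv 3 f 0 * x ^ 3 / 6)| ≤ M / 24 * x ^ 4 := by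
  intro x hx
  rcases eq_or_lt_of_le hx.1 with h0 | h0
  · simp [← h0]
  · have hiw := gl_iterWithin_eq f hf h0
    have hcd : ContDiffOn ℝ 3 f (Set.Icc 0 x) := (hf.of_le (by norm_num)).contDiffOn
    have hdiff : DifferentiableOn ℝ (iteratedDerivWithin 3 f (Set.Icc 0 x)) (Set.Ioo 0 x) := by
      apply DifferentiableOn.congr
        ((hf.differentiable_iteratedDeriv 3 (by norm_cast)).differentiableOn
          (s := Set.Ioo 0 x))
      intro y hy
      exact hiw 3 (by norm_num) y (Set.Ioo_subset_Icc_self hy)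
    obtain ⟨x', hx', hfx⟩ := taylor_mean_remainder_lagrange (n := 3) h0.ne
      (by rwa [Set.uIcc_of_le h0.le]) (by rwa [Set.uIcc_of_le h0.le, Set.uIoo_of_le h0.le])
    rw [Set.uIcc_of_le h0.le] at hfx
    rw [Set.uIoo_of_le h0.le] at hx'
    rw [taylor_within_apply] at hfx
    have e0 := hiw 0 (by norm_num) 0 (Set.mem_Icc.2 ⟨le_refl _, h0.le⟩)
    have e1 := hiw 1 (by norm_num) 0 (Set.mem_Icc.2 ⟨le_refl _, h0.le⟩)
    have e2 := hiw 2 (by norm_num) 0 (Set.mem_Icc.2 ⟨le_refl _, h0.le⟩)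
    have e3 := hiw 3 (by norm_num) 0 (Set.mem_Icc.2 ⟨le_refl _, h0.le⟩)
    have e4 := hiw 4 (by norm_num) x' (Set.Ioo_subset_Icc_self hx')
    simp [Finset.sum_range_succ, e0, e1, e2, e3, e4, iteratedDeriv_one,
      iteratedDeriv_zero, Nat.factorial] at hfx
    have hkey : f x - (f 0 + deriv f 0 * x + iteratedDeriv 2 f 0 * x ^ 2 / 2 +
        iteratedDeriv 3 f 0 * x ^ 3 / 6) = iteratedDeriv 4 f x' * x ^ 4 / 24 := by
      linear_combination hfx
    rw [hkey]
    have hx'M : |iteratedDeriv 4 f x'| ≤ M :=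
      hM x' ⟨hx'.1.le, le_trans hx'.2.le hx.2⟩
    rw [abs_div, abs_mul, abs_pow, abs_of_pos h0]
    have h24 : |(24:ℝ)| = 24 := by norm_num
    rw [h24]
    have hx4 : (0:ℝ) ≤ x ^ 4 := by positivity
    rw [div_le_iff₀ (by norm_num : (0:ℝ) < 24)] at *
    nlinarith

theorem gauss_legendre_edge_value_expansion
    (f : ℝ → ℝ) (hf : ContDiff ℝ 4 f) :
    ∃ C > 0, ∃ h₀ > 0, ∀ h : ℝ, 0 < h → h ≤ h₀ →
      |((1 / 2) * f 0 + (1 / 2) * f (h / 2 - h / (2 * Real.sqrt 3)) +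
            (1 / 2) * f (h / 2 + h / (2 * Real.sqrt 3)) - (1 / 2) * f h) -
          (f 0 - h ^ 2 / 12 * iteratedDeriv 2 f 0 - h ^ 3 / 24 * iteratedDeriv 3 f 0)|
        ≤ C * h ^ 4 := by
  obtain ⟨M, hM⟩ := (isCompact_Icc (a := (0:ℝ)) (b := 1)).exists_bound_of_continuousOn
    ((hf.continuous_iteratedDeriv 4 (le_refl _)).continuousOn)
  have hM' : ∀ y ∈ Set.Icc (0:ℝ) 1, |iteratedDeriv 4 f y| ≤ M := by
    simpa [Real.norm_eq_abs] using hM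
  have hM0 : 0 ≤ M := le_trans (abs_nonneg _) (hM' 0 (by norm_num))
  have htb := gl_taylor4 f hf M hM'
  refine ⟨M / 16 + 1, by positivity, 1, one_pos, ?_⟩
  intro h hh hh1
  set s := Real.sqrt 3 with hs
  have hs2 : s ^ 2 = 3 := Real.sq_sqrt (by norm_num)
  have hs1 : 1 ≤ s := by nlinarith [Real.sqrt_nonneg 3]
  have hsne : s ≠ 0 := by nlinarith
  have hb : h / (2 * s) = h * s / 6 := by
    rw [div_eq_div_iff (mul_ne_zero two_ne_zero hsne) (by norm_num : (6:ℝ) ≠ 0)]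
    linear_combination (-2 * h) * hs2
  set g : ℝ → ℝ := fun y => f y - (f 0 + deriv f 0 * y + iteratedDeriv 2 f 0 * y ^ 2 / 2 +
    iteratedDeriv 3 f 0 * y ^ 3 / 6) with hg
  have ht1 : h / 2 - h / (2 * s) = h / 2 - h * s / 6 := by rw [hb]
  have ht2 : h / 2 + h / (2 * s) = h / 2 + h * s / 6 := by rw [hb]
  have hkey : ((1 / 2) * f 0 + (1 / 2) * f (h / 2 - h / (2 * s)) +
        (1 / 2) * f (h / 2 + h / (2 * s)) - (1 / 2) * f h) -
      (f 0 - h ^ 2 / 12 * iteratedDeriv 2 f 0 - h ^ 3 / 24 * iteratedDeriv 3 f 0) =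
      (1 / 2) * g (h / 2 - h * s / 6) + (1 / 2) * g (h / 2 + h * s / 6) - (1 / 2) * g h := by
    rw [ht1, ht2]
    simp only [hg]
    linear_combination (h ^ 2 * iteratedDeriv 2 f 0 / 72 +
      h ^ 3 * iteratedDeriv 3 f 0 / 144) * hs2
  rw [hkey]
  -- membership and fourth-power bounds for the nodes
  have hs0 : 0 < s := by linarith
  have hb0 : 0 ≤ h * s / 6 := by positivity
  have hble : h * s / 6 ≤ h / 2 := by nlinarith [hs2, Real.sqrt_nonneg 3]
  have ht1m : h / 2 - h * s / 6 ∈ Set.Icc (0:ℝ) 1 := ⟨by linarith, by linarith⟩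
  have ht2m : h / 2 + h * s / 6 ∈ Set.Icc (0:ℝ) 1 := ⟨by linarith, by linarith⟩
  have hhm : h ∈ Set.Icc (0:ℝ) 1 := ⟨hh.le, hh1⟩
  have b1 := htb _ ht1m
  have b2 := htb _ ht2m
  have b3 := htb _ hhm
  have p1 : (h / 2 - h * s / 6) ^ 4 ≤ h ^ 4 := by
    apply pow_le_pow_left₀ (by linarith) (by linarith)
  have p2 : (h / 2 + h * s / 6) ^ 4 ≤ h ^ 4 := by
    apply pow_le_pow_left₀ (by linarith) (by linarith)
  have habs : |(1/2 : ℝ)| = 1/2 := by norm_num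
  have hab : |(1 / 2) * g (h / 2 - h * s / 6) + (1 / 2) * g (h / 2 + h * s / 6) -
      (1 / 2) * g h| ≤ (1/2) * |g (h / 2 - h * s / 6)| + (1/2) * |g (h / 2 + h * s / 6)| +
      (1/2) * |g h| := by
    have A := abs_add_le ((1 / 2) * g (h / 2 - h * s / 6)) ((1 / 2) * g (h / 2 + h * s / 6))
    have B := abs_sub ((1 / 2) * g (h / 2 - h * s / 6) + (1 / 2) * g (h / 2 + h * s / 6))
      ((1 / 2) * g h)
    simp only [abs_mul, habs] at A B
    linarith
  have hMc : (0:ℝ) ≤ M / 24 := by positivity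
  have d1 : |g (h / 2 - h * s / 6)| ≤ M / 24 * h ^ 4 := by
    refine le_trans ?_ (mul_le_mul_of_nonneg_left p1 hMc)
    simpa only [hg] using b1
  have d2 : |g (h / 2 + h * s / 6)| ≤ M / 24 * h ^ 4 := by
    refine le_trans ?_ (mul_le_mul_of_nonneg_left p2 hMc)
    simpa only [hg] using b2
  have d3 : |g h| ≤ M / 24 * h ^ 4 := by simpa only [hg] using b3
  have hx4 : (0:ℝ) ≤ h ^ 4 := by positivity
  have hfin : (1/2) * |g (h / 2 - h * s / 6)| + (1/2) * |g (h / 2 + h * s / 6)| +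
      (1/2) * |g h| ≤ (M / 16 + 1) * h ^ 4 := by linarith [d1, d2, d3, hx4]
  exact le_trans hab hfin
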